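/- arXiv:1309.7064 — 6 statements merged into one kernel-verified Lean document; each statement's English description precedes it below -/
import Mathlib

section
/- Let P and Q be polytopes in ℚ^n such that P ∪ Q is also a polytope (i.e., convex). Then the Minkowski sum (P ∪ Q) + (P ∩ Q) equals P + Q. -/
open Finset

variable {E : Type*} [AddCommGroup E] [Module ℚ E] [DecidableEq E]

/-- hard direction helper: merging induction. -/
lemma slice_aux (V W : Finset E) (g : E →ₗ[ℚ] ℚ) (c : ℚ)
    (hWc : ∀ u ∈ W, g u = c)
    (hVW : ∀ v ∈ V, g v = c → v ∈ W)
    (hpair : ∀ i ∈ V, ∀ j ∈ V, g i < c → c < g j →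
      ((1 - (c - g i)/(g j - g i)) • i + ((c - g i)/(g j - g i)) • j) ∈ W) :
    ∀ k (w : E → ℚ) (x : E),
      ((V ∪ W).filter (fun v => w v ≠ 0 ∧ g v ≠ c)).card ≤ k →
      (∀ v ∈ V ∪ W, 0 ≤ w v) →
      (∑ v ∈ V ∪ W, w v = 1) →
      (∑ v ∈ V ∪ W, w v • v = x) →
      g x = c →
      x ∈ convexHull ℚ (W : Set E) := by
  set U := V ∪ W with hU
  intro k
  induction k with
  | zero =>
    intro w x hcard hw0 hw1 hwx hgx
    have hempty : (U.filter (fun v => w v ≠ 0 ∧ g v ≠ c)) = ∅ :=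
      card_eq_zero.mp (Nat.le_zero.mp hcard)
    -- every support element is in W
    have hsupp : ∀ v ∈ U, w v ≠ 0 → v ∈ W := by
      intro v hv hwv
      have hgv : g v = c := by
        by_contra hgv
        have : v ∈ U.filter (fun v => w v ≠ 0 ∧ g v ≠ c) := mem_filter.mpr ⟨hv, hwv, hgv⟩
        simp [hempty] at this
      rcases mem_union.mp hv with h | h
      · exact hVW v h hgv
      · exact h
    set t := U.filter (fun v => w v ≠ 0) with ht
    have hsum1 : ∑ v ∈ t, w v = 1 := by
      rw [← hw1]
      exact Finset.sum_filter_of_ne (fun v _ h => by simpa using h)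
    have hsumx : ∑ v ∈ t, w v • v = x := by
      rw [← hwx]
      exact Finset.sum_filter_of_ne (fun v _ h => by
        intro hw; simp [hw] at h)
    have := Finset.centerMass_mem_convexHull t
      (fun i hi => hw0 i (mem_filter.mp hi).1) (by rw [hsum1]; norm_num)
      (fun i hi => hsupp i (mem_filter.mp hi).1 (mem_filter.mp hi).2)
    rwa [Finset.centerMass, hsum1, hsumx, inv_one, one_smul] at this
  | succ k ih =>
    intro w x hcard hw0 hw1 hwx hgx
    by_cases hbad : ∃ v ∈ U, w v ≠ 0 ∧ g v ≠ c
    case neg =>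
      -- no bad element: filter is empty, use the zero-case argument
      have : (U.filter (fun v => w v ≠ 0 ∧ g v ≠ c)).card ≤ 0 := by
        rw [Finset.filter_false_of_mem, Finset.card_empty]
        intro v hv
        push_neg at hbad
        intro h
        exact h.2 (hbad v hv h.1)
      exact ih w x (this.trans (Nat.zero_le k)) hw0 hw1 hwx hgx
    case pos =>
      obtain ⟨v, hvU, hwv, hgv⟩ := hbad
      have hsumg : ∑ v ∈ U, w v * g v = c := by
        have : g (∑ v ∈ U, w v • v) = ∑ v ∈ U, w v * g v := by
          rw [map_sum]; simp [smul_eq_mul]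
        rw [hwx, hgx] at this; exact this.symm
      have hsum0 : ∑ v ∈ U, w v * (g v - c) = 0 := by
        have : ∑ v ∈ U, w v * (g v - c) = (∑ v ∈ U, w v * g v) - (∑ v ∈ U, w v) * c := by
          rw [Finset.sum_mul, ← Finset.sum_sub_distrib]; congr 1; ext v; ring
        rw [this, hsumg, hw1, one_mul, sub_self]
      have hvterm : w v * (g v - c) ≠ 0 := mul_ne_zero hwv (sub_ne_zero.mpr hgv)
      have hExNeg : ∃ i ∈ U, w i * (g i - c) < 0 := by
        by_contra h; push_neg at h
        exact hvterm ((Finset.sum_eq_zero_iff_of_nonneg h).mp hsum0 v hvU)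
      have hExPos : ∃ j ∈ U, 0 < w j * (g j - c) := by
        by_contra h; push_neg at h
        have h0 : ∑ v ∈ U, -(w v * (g v - c)) = 0 := by
          rw [Finset.sum_neg_distrib, hsum0, neg_zero]
        have := (Finset.sum_eq_zero_iff_of_nonneg
          (fun i hi => neg_nonneg.mpr (h i hi))).mp h0 v hvU
        exact hvterm (neg_eq_zero.mp this)
      obtain ⟨i, hiU, hi⟩ := hExNeg
      obtain ⟨j, hjU, hj⟩ := hExPos
      have hwi : 0 < w i := by
        rcases (hw0 i hiU).lt_or_eq with h | h
        · exact h
        · exfalso; rw [← h] at hi; simp at hi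
      have hgi : g i < c := by nlinarith
      have hwj : 0 < w j := by
        rcases (hw0 j hjU).lt_or_eq with h | h
        · exact h
        · exfalso; rw [← h] at hj; simp at hj
      have hgj : c < g j := by nlinarith
      have hiV : i ∈ V := (Finset.mem_union.mp hiU).resolve_right
        (fun h => absurd (hWc i h) (ne_of_lt hgi))
      have hjV : j ∈ V := (Finset.mem_union.mp hjU).resolve_right
        (fun h => absurd (hWc j h) (ne_of_gt hgj))
      set μ := (c - g i)/(g j - g i) with hμdef
      have hμ0 : 0 < μ := div_pos (by linarith) (by linarith)
      have hμ1 : μ < 1 := (div_lt_one (by linarith)).mpr (by linarith)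
      set e := (1-μ) • i + μ • j with hedef
      have heW : e ∈ W := hpair i hiV j hjV hgi hgj
      have hge : g e = c := hWc e heW
      have heU : e ∈ U := Finset.mem_union_right _ heW
      have hei : e ≠ i := fun h => (ne_of_lt hgi) (h ▸ hge)
      have hej : e ≠ j := fun h => (ne_of_gt hgj) (h ▸ hge)
      have hij : i ≠ j := by rintro rfl; linarith
      set δ := min (w i / (1 - μ)) (w j / μ) with hδdef
      have hδ : 0 < δ := lt_min (div_pos hwi (by linarith)) (div_pos hwj hμ0)
      set w' := fun v => w v + (if v = e then δ else 0)
        - (if v = i then δ*(1-μ) else 0) - (if v = j then δ*μ else 0) with hw'def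
      have hw'1 : ∑ v ∈ U, w' v = 1 := by
        simp only [hw'def, Finset.sum_sub_distrib, Finset.sum_add_distrib,
          Finset.sum_ite_eq', heU, hiU, hjU, if_pos, hw1]
        ring
      have keysum : ∀ (a : E) (r : ℚ), a ∈ U →
          ∑ v ∈ U, (if v = a then r else 0) • v = r • a := by
        intro a r ha
        have : ∀ v : E, (if v = a then r else 0) • v = (if v = a then r • v else 0) := by
          intro v; split <;> simp
        rw [Finset.sum_congr rfl (fun v _ => this v), Finset.sum_ite_eq' U a (fun v => r • v),
          if_pos ha]
      have hw'x : ∑ v ∈ U, w' v • v = x := by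
        have hsplit : ∀ v : E, w' v • v = w v • v + (if v = e then δ else 0) • v
            - (if v = i then δ*(1-μ) else 0) • v - (if v = j then δ*μ else 0) • v := by
          intro v; simp only [hw'def, sub_smul, add_smul]
        rw [Finset.sum_congr rfl (fun v _ => hsplit v), Finset.sum_sub_distrib,
          Finset.sum_sub_distrib, Finset.sum_add_distrib, keysum e δ heU,
          keysum i (δ*(1-μ)) hiU, keysum j (δ*μ) hjU, hwx, hedef, smul_add,
          smul_smul, smul_smul]
        abel
      have hδi : δ * (1 - μ) ≤ w i := by
        rw [← le_div_iff₀ (by linarith : (0:ℚ) < 1 - μ)]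
        exact min_le_left _ _
      have hδj : δ * μ ≤ w j := by
        rw [← le_div_iff₀ hμ0]
        exact min_le_right _ _
      have hne1μ : (1:ℚ) - μ ≠ 0 := by linarith
      have hw'0 : ∀ v ∈ U, 0 ≤ w' v := by
        intro v hv
        have h0 := hw0 v hv
        by_cases h1 : v = e
        · have hwe : w' v = w v + δ := by
            simp only [hw'def, if_pos h1, if_neg (fun h => hei (h1.symm.trans h)),
              if_neg (fun h => hej (h1.symm.trans h))]
            ring
          rw [hwe]; linarith
        · by_cases h2 : v = i
          · have hwe : w' v = w v - δ * (1 - μ) := by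
              simp only [hw'def, if_neg h1, if_pos h2,
                if_neg (fun h => hij (h2.symm.trans h))]
              ring
            rw [hwe, h2]
            have : w i - δ * (1 - μ) ≥ 0 := by linarith
            linarith
          · by_cases h3 : v = j
            · have hwe : w' v = w v - δ * μ := by
                simp only [hw'def, if_neg h1, if_neg h2, if_pos h3]
                ring
              rw [hwe, h3]
              linarith
            · have hwe : w' v = w v := by
                simp only [hw'def, if_neg h1, if_neg h2, if_neg h3]
                ring
              rw [hwe]; exact h0
      set S := U.filter (fun v => w v ≠ 0 ∧ g v ≠ c) with hSdef
      set S' := U.filter (fun v => w' v ≠ 0 ∧ g v ≠ c) with hS'def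
      have key : ∀ a ∈ U, a ≠ i → a ≠ j → w' a ≠ 0 → g a ≠ c → a ∈ S := by
        intro a haU hai haj hwa hga
        have hae : a ≠ e := fun h => hga (h ▸ hge)
        refine Finset.mem_filter.mpr ⟨haU, ?_, hga⟩
        simpa only [hw'def, if_neg hae, if_neg hai, if_neg haj, add_zero, sub_zero] using hwa
      have hjS : j ∈ S := Finset.mem_filter.mpr ⟨hjU, hwj.ne', ne_of_gt hgj⟩
      have hiS : i ∈ S := Finset.mem_filter.mpr ⟨hiU, hwi.ne', ne_of_lt hgi⟩
      have hcard' : S'.card ≤ k := by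
        by_cases hmin : w i / (1 - μ) ≤ w j / μ
        · have hw'i : w' i = 0 := by
            simp only [hw'def, if_neg (Ne.symm hei), if_pos rfl, if_neg hij,
              hδdef, min_eq_left hmin, add_zero, sub_zero]
            field_simp [hne1μ]
            simp
          have hsub : S' ⊆ S.erase i := by
            intro a ha
            obtain ⟨haU, hwa, hga⟩ := Finset.mem_filter.mp ha
            have hai : a ≠ i := fun h => hwa (h ▸ hw'i)
            refine Finset.mem_erase.mpr ⟨hai, ?_⟩
            by_cases haj : a = j
            · exact haj ▸ hjS
            · exact key a haU hai haj hwa hga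
          have := Finset.card_le_card hsub
          rw [Finset.card_erase_of_mem hiS] at this
          omega
        · have hw'j : w' j = 0 := by
            simp only [hw'def, if_neg (Ne.symm hej), if_neg (Ne.symm hij), if_pos rfl,
              hδdef, min_eq_right (le_of_not_ge hmin), add_zero]
            field_simp [hμ0.ne']
            simp
          have hsub : S' ⊆ S.erase j := by
            intro a ha
            obtain ⟨haU, hwa, hga⟩ := Finset.mem_filter.mp ha
            have haj : a ≠ j := fun h => hwa (h ▸ hw'j)
            refine Finset.mem_erase.mpr ⟨haj, ?_⟩
            by_cases hai : a = i
            · exact hai ▸ hiS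
            · exact key a haU hai haj hwa hga
          have := Finset.card_le_card hsub
          rw [Finset.card_erase_of_mem hjS] at this
          omega
      exact ih w' x hcard' hw'0 hw'1 hw'x hgx

/-- Slicing a polytope by a hyperplane gives a polytope. -/
lemma slice_polytope (V : Finset E) (g : E →ₗ[ℚ] ℚ) (c : ℚ) :
    ∃ W : Finset E, (W : Set E) ⊆ convexHull ℚ (V : Set E) ∩ {x | g x = c} ∧
      convexHull ℚ (V : Set E) ∩ {x | g x = c} ⊆ convexHull ℚ (W : Set E) := by
  classical
  set efun : E × E → E := fun p =>
    (1 - (c - g p.1)/(g p.2 - g p.1)) • p.1 + ((c - g p.1)/(g p.2 - g p.1)) • p.2 with hefun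
  set W : Finset E := V.filter (fun v => g v = c) ∪
    ((V ×ˢ V).filter (fun p => g p.1 < c ∧ c < g p.2)).image efun with hW
  have hWc : ∀ u ∈ W, g u = c := by
    intro u hu
    rcases Finset.mem_union.mp hu with h | h
    · exact (Finset.mem_filter.mp h).2
    · obtain ⟨p, hp, rfl⟩ := Finset.mem_image.mp h
      obtain ⟨-, h1, h2⟩ := Finset.mem_filter.mp hp
      have hne : g p.2 - g p.1 ≠ 0 := by intro h; rw [sub_eq_zero] at h; rw [h] at h2; linarith
      simp only [hefun, map_add, map_smul, smul_eq_mul]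
      field_simp
      ring
  have hWV : ∀ u ∈ W, u ∈ convexHull ℚ (V : Set E) := by
    intro u hu
    rcases Finset.mem_union.mp hu with h | h
    · exact subset_convexHull ℚ _ (Finset.mem_coe.mpr (Finset.mem_filter.mp h).1)
    · obtain ⟨p, hp, rfl⟩ := Finset.mem_image.mp h
      obtain ⟨hpV, h1, h2⟩ := Finset.mem_filter.mp hp
      obtain ⟨hp1, hp2⟩ := Finset.mem_product.mp hpV
      set μ := (c - g p.1)/(g p.2 - g p.1) with hμ
      have hμ0 : 0 ≤ μ := le_of_lt (div_pos (by linarith) (by linarith))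
      have hμ1 : (0:ℚ) ≤ 1 - μ := by
        have : μ < 1 := (div_lt_one (by linarith)).mpr (by linarith)
        linarith
      exact (convex_convexHull ℚ (V : Set E))
        (subset_convexHull ℚ _ (Finset.mem_coe.mpr hp1))
        (subset_convexHull ℚ _ (Finset.mem_coe.mpr hp2)) hμ1 hμ0 (by ring)
  refine ⟨W, ?_, ?_⟩
  · intro u hu
    exact ⟨hWV u (Finset.mem_coe.mp hu), hWc u (Finset.mem_coe.mp hu)⟩
  · rintro x ⟨hx, hgx⟩
    rw [Finset.convexHull_eq] at hx
    obtain ⟨w, hw0, hw1, hwx⟩ := hx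
    -- extend weights to V ∪ W by zero on W \ V
    set w2 : E → ℚ := fun v => if v ∈ V then w v else 0 with hw2
    have hsum1 : ∑ v ∈ V ∪ W, w2 v = 1 := by
      rw [← hw1]
      rw [Finset.sum_ite_mem, Finset.union_inter_cancel_left]
    have hsumx : ∑ v ∈ V ∪ W, w2 v • v = x := by
      rw [Finset.centerMass_eq_of_sum_1 _ id hw1] at hwx
      rw [← hwx]
      have : ∀ v : E, w2 v • v = if v ∈ V then w v • v else 0 := by
        intro v; simp only [hw2]; by_cases h : v ∈ V <;> simp [h]
      rw [Finset.sum_congr rfl (fun v _ => this v), Finset.sum_ite_mem,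
        Finset.union_inter_cancel_left]
      rfl
    refine slice_aux V W g c hWc ?_ ?_
      ((V ∪ W).filter (fun v => w2 v ≠ 0 ∧ g v ≠ c)).card w2 x le_rfl ?_ hsum1 hsumx hgx
    · intro v hv hgv
      exact Finset.mem_union_left _ (Finset.mem_filter.mpr ⟨hv, hgv⟩)
    · intro i hi j hj h1 h2
      refine Finset.mem_union_right _ (Finset.mem_image.mpr ⟨(i, j), ?_, rfl⟩)
      exact Finset.mem_filter.mpr ⟨Finset.mem_product.mpr ⟨hi, hj⟩, h1, h2⟩
    · intro v hv
      simp only [hw2]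
      split
      · exact hw0 v ‹_›
      · exact le_refl 0

/-- Iterated slicing along a list of hyperplanes. -/
lemma slice_polytope_list (V : Finset E) (l : List ((E →ₗ[ℚ] ℚ) × ℚ)) :
    ∃ W : Finset E, (W : Set E) ⊆ convexHull ℚ (V : Set E) ∩ {x | ∀ p ∈ l, p.1 x = p.2} ∧
      convexHull ℚ (V : Set E) ∩ {x | ∀ p ∈ l, p.1 x = p.2} ⊆ convexHull ℚ (W : Set E) := by
  classical
  induction l generalizing V with
  | nil =>
    exact ⟨V, fun v hv => ⟨subset_convexHull ℚ _ hv, by simp⟩, fun x hx => hx.1⟩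
  | cons gc l ih =>
    obtain ⟨W1, hW1a, hW1b⟩ := slice_polytope V gc.1 gc.2
    obtain ⟨W, hWa, hWb⟩ := ih W1
    have hconv : convexHull ℚ (W1 : Set E) ⊆ convexHull ℚ (V : Set E) ∩ {x | gc.1 x = gc.2} :=
      convexHull_min hW1a ((convex_convexHull ℚ _).inter (convex_hyperplane gc.1.isLinear gc.2))
    refine ⟨W, ?_, ?_⟩
    · intro u hu
      obtain ⟨hu1, hu2⟩ := hWa hu
      obtain ⟨hu3, hu4⟩ := hconv hu1
      exact ⟨hu3, by
        intro p hp
        rcases List.mem_cons.mp hp with h | h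
        · rw [h]; exact hu4
        · exact hu2 p h⟩
    · rintro x ⟨hx, hxl⟩
      refine hWb ⟨hW1b ⟨hx, hxl gc (List.mem_cons_self)⟩, ?_⟩
      intro p hp
      exact hxl p (List.mem_cons_of_mem _ hp)

open Pointwise

/-- If `P` and `Q` are polytopes in `ℚ^n` (convex hulls of finite sets)
whose union is also a polytope, then `(P ∪ Q) + (P ∩ Q) = P + Q` (Minkowski sum). -/
theorem union_add_inter_eq_add_of_polytopes {n : ℕ} (P Q : Set (Fin n → ℚ))
    (hP : ∃ s : Finset (Fin n → ℚ), P = convexHull ℚ (s : Set (Fin n → ℚ)))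
    (hQ : ∃ s : Finset (Fin n → ℚ), Q = convexHull ℚ (s : Set (Fin n → ℚ)))
    (hU : ∃ s : Finset (Fin n → ℚ), P ∪ Q = convexHull ℚ (s : Set (Fin n → ℚ))) :
    (P ∪ Q) + (P ∩ Q) = P + Q := by
  classical
  obtain ⟨s, hs⟩ := hP
  obtain ⟨s', hs'⟩ := hQ
  obtain ⟨u, hu⟩ := hU
  have hPconv : Convex ℚ P := hs ▸ convex_convexHull ℚ _
  have hQconv : Convex ℚ Q := hs' ▸ convex_convexHull ℚ _
  have hUconv : Convex ℚ (P ∪ Q) := hu ▸ convex_convexHull ℚ _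
  apply Set.Subset.antisymm
  · rintro x hx
    rw [Set.mem_add] at hx ⊢
    obtain ⟨a, ha, b, hb, rfl⟩ := hx
    rcases ha with ha | ha
    · exact ⟨a, ha, b, hb.2, rfl⟩
    · exact ⟨b, hb.1, a, ha, add_comm b a⟩
  · rintro x hx
    rw [Set.mem_add] at hx ⊢
    obtain ⟨p, hp, q, hq, rfl⟩ := hx
    by_cases hpq : p = q
    · exact ⟨p, Or.inl hp, q, ⟨hpq ▸ hp, hq⟩, rfl⟩
    · obtain ⟨k0, hk0⟩ := Function.ne_iff.mp hpq
      set d : Fin n → ℚ := fun k => q k - p k with hd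
      have hd0 : d k0 ≠ 0 := sub_ne_zero.mpr (Ne.symm hk0)
      set f : ℚ → (Fin n → ℚ) := fun t => fun k => p k + t * d k with hf
      have hfc : ∀ t : ℚ, f t = (1 - t) • p + t • q := by
        intro t; funext k
        simp only [hf, hd, Pi.add_apply, Pi.smul_apply, smul_eq_mul]
        ring
      have hf0 : f 0 = p := by funext k; simp [hf]
      have hf1 : f 1 = q := by funext k; simp [hf, hd]
      set g : Fin n → ((Fin n → ℚ) →ₗ[ℚ] ℚ) :=
        fun k => d k0 • LinearMap.proj k - d k • LinearMap.proj k0 with hg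
      set cc : Fin n → ℚ := fun k => d k0 * p k - d k * p k0 with hcc
      have hgapp : ∀ (k : Fin n) (x : Fin n → ℚ), g k x = d k0 * x k - d k * x k0 := by
        intro k x; simp [hg, smul_eq_mul]
      set τ : (Fin n → ℚ) → ℚ := fun x => (x k0 - p k0) / d k0 with hτ
      have hfline : ∀ (t : ℚ) (k : Fin n), g k (f t) = cc k := by
        intro t k; rw [hgapp]; simp only [hf, hcc]; ring
      have hτf : ∀ t : ℚ, τ (f t) = t := by
        intro t; simp only [hτ, hf]; field_simp
        ring
      have hlinef : ∀ x : Fin n → ℚ, (∀ k, g k x = cc k) → f (τ x) = x := by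
        intro x hx; funext k
        have h := hx k; rw [hgapp] at h
        simp only [hf, hτ, hcc] at h ⊢
        field_simp
        linear_combination -h
      set l : List (((Fin n → ℚ) →ₗ[ℚ] ℚ) × ℚ) :=
        (List.finRange n).map (fun k => (g k, cc k)) with hl
      have hlmem : ∀ x : Fin n → ℚ, (∀ pr ∈ l, pr.1 x = pr.2) ↔ ∀ k, g k x = cc k := by
        intro x
        constructor
        · intro h k; exact h (g k, cc k) (List.mem_map.mpr ⟨k, List.mem_finRange k, rfl⟩)
        · rintro h pr hpr; obtain ⟨k, -, rfl⟩ := List.mem_map.mp hpr; exact h k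
      obtain ⟨WP, hWPa, hWPb⟩ := slice_polytope_list s l
      obtain ⟨WQ, hWQa, hWQb⟩ := slice_polytope_list s' l
      have hpin : p ∈ convexHull ℚ (s : Set (Fin n → ℚ)) ∩ {x | ∀ pr ∈ l, pr.1 x = pr.2} :=
        ⟨hs ▸ hp, (hlmem p).mpr (fun k => by rw [← hf0]; exact hfline 0 k)⟩
      have hqin : q ∈ convexHull ℚ (s' : Set (Fin n → ℚ)) ∩ {x | ∀ pr ∈ l, pr.1 x = pr.2} :=
        ⟨hs' ▸ hq, (hlmem q).mpr (fun k => by rw [← hf1]; exact hfline 1 k)⟩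
      have hWPne : WP.Nonempty := by
        rcases WP.eq_empty_or_nonempty with h | h
        · exfalso; have := hWPb hpin; rw [h] at this; simp at this
        · exact h
      have hWQne : WQ.Nonempty := by
        rcases WQ.eq_empty_or_nonempty with h | h
        · exfalso; have := hWQb hqin; rw [h] at this; simp at this
        · exact h
      obtain ⟨vP, hvP, hvPmax⟩ := Finset.exists_max_image WP τ hWPne
      obtain ⟨vQ, hvQ, hvQmin⟩ := Finset.exists_min_image WQ τ hWQne
      have hτaffine : ∀ (a b : ℚ) (y1 y2 : Fin n → ℚ), a + b = 1 →
          τ (a • y1 + b • y2) = a * τ y1 + b * τ y2 := by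
        intro a b y1 y2 hab
        simp only [hτ, Pi.add_apply, Pi.smul_apply, smul_eq_mul]
        field_simp
        linear_combination p k0 * hab
      have hboundP : ∀ x ∈ convexHull ℚ (WP : Set (Fin n → ℚ)), τ x ≤ τ vP := by
        intro x hx
        have hsub : convexHull ℚ (WP : Set (Fin n → ℚ)) ⊆ {y | τ y ≤ τ vP} := by
          apply convexHull_min
          · intro y hy; exact hvPmax y hy
          · intro y1 h1 y2 h2 a b ha hb hab
            simp only [Set.mem_setOf_eq] at h1 h2 ⊢
            rw [hτaffine a b y1 y2 hab]
            have e1 := mul_le_mul_of_nonneg_left h1 ha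
            have e2 := mul_le_mul_of_nonneg_left h2 hb
            have e3 : a * τ vP + b * τ vP = τ vP := by linear_combination τ vP * hab
            linarith
        exact hsub hx
      have hboundQ : ∀ x ∈ convexHull ℚ (WQ : Set (Fin n → ℚ)), τ vQ ≤ τ x := by
        intro x hx
        have hsub : convexHull ℚ (WQ : Set (Fin n → ℚ)) ⊆ {y | τ vQ ≤ τ y} := by
          apply convexHull_min
          · intro y hy; exact hvQmin y hy
          · intro y1 h1 y2 h2 a b ha hb hab
            simp only [Set.mem_setOf_eq] at h1 h2 ⊢
            rw [hτaffine a b y1 y2 hab]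
            have e1 := mul_le_mul_of_nonneg_left h1 ha
            have e2 := mul_le_mul_of_nonneg_left h2 hb
            have e3 : a * τ vQ + b * τ vQ = τ vQ := by linear_combination τ vQ * hab
            linarith
        exact hsub hx
      have hτp : τ p = 0 := by rw [← hf0, hτf]
      have hτq : τ q = 1 := by rw [← hf1, hτf]
      have h0le : (0:ℚ) ≤ τ vP := by
        have := hboundP p (hWPb hpin); rw [hτp] at this; exact this
      have hle1 : τ vQ ≤ 1 := by
        have := hboundQ q (hWQb hqin); rw [hτq] at this; exact this
      -- the sets of parameters
      have hTPconv : Convex ℚ {t : ℚ | f t ∈ P} := by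
        intro t1 h1 t2 h2 a b ha hb hab
        simp only [Set.mem_setOf_eq] at h1 h2 ⊢
        have heq : f (a • t1 + b • t2) = a • f t1 + b • f t2 := by
          funext k
          simp only [hf, Pi.add_apply, Pi.smul_apply, smul_eq_mul]
          linear_combination (-(p k)) * hab
        rw [heq]; exact hPconv h1 h2 ha hb hab
      have hTQconv : Convex ℚ {t : ℚ | f t ∈ Q} := by
        intro t1 h1 t2 h2 a b ha hb hab
        simp only [Set.mem_setOf_eq] at h1 h2 ⊢
        have heq : f (a • t1 + b • t2) = a • f t1 + b • f t2 := by
          funext k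
          simp only [hf, Pi.add_apply, Pi.smul_apply, smul_eq_mul]
          linear_combination (-(p k)) * hab
        rw [heq]; exact hQconv h1 h2 ha hb hab
      have hvPline : ∀ k, g k vP = cc k := (hlmem vP).mp (hWPa hvP).2
      have hvQline : ∀ k, g k vQ = cc k := (hlmem vQ).mp (hWQa hvQ).2
      have hfvP : f (τ vP) ∈ P := by rw [hlinef vP hvPline]; exact hs ▸ (hWPa hvP).1
      have hfvQ : f (τ vQ) ∈ Q := by rw [hlinef vQ hvQline]; exact hs' ▸ (hWQa hvQ).1
      set α := min (τ vP) 1 with hα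
      set β := max (τ vQ) 0 with hβ
      have hα0 : 0 ≤ α := le_min h0le zero_le_one
      have hα1 : α ≤ 1 := min_le_right _ _
      have hβ0 : 0 ≤ β := le_max_right _ _
      have hβ1 : β ≤ 1 := max_le hle1 zero_le_one
      have hfαP : f α ∈ P := by
        have h0T : (0:ℚ) ∈ {t : ℚ | f t ∈ P} := by rw [Set.mem_setOf_eq, hf0]; exact hp
        exact hTPconv.ordConnected.out h0T hfvP ⟨hα0, min_le_left _ _⟩
      have hfβQ : f β ∈ Q := by
        have h1T : (1:ℚ) ∈ {t : ℚ | f t ∈ Q} := by rw [Set.mem_setOf_eq, hf1]; exact hq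
        exact hTQconv.ordConnected.out hfvQ h1T ⟨le_max_left _ _, hβ1⟩
      have hubP : ∀ t : ℚ, 0 ≤ t → t ≤ 1 → f t ∈ P → t ≤ α := by
        intro t ht0 ht1 htP
        refine le_min ?_ ht1
        have hmem : f t ∈ convexHull ℚ (WP : Set (Fin n → ℚ)) :=
          hWPb ⟨hs ▸ htP, (hlmem (f t)).mpr (fun k => hfline t k)⟩
        have := hboundP (f t) hmem
        rwa [hτf] at this
      have hlbQ : ∀ t : ℚ, 0 ≤ t → t ≤ 1 → f t ∈ Q → β ≤ t := by
        intro t ht0 ht1 htQ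
        refine max_le ?_ ht0
        have hmem : f t ∈ convexHull ℚ (WQ : Set (Fin n → ℚ)) :=
          hWQb ⟨hs' ▸ htQ, (hlmem (f t)).mpr (fun k => hfline t k)⟩
        have := hboundQ (f t) hmem
        rwa [hτf] at this
      have hcover : ∀ t : ℚ, 0 ≤ t → t ≤ 1 → f t ∈ P ∪ Q := by
        intro t ht0 ht1
        rw [hfc t]
        exact hUconv (Or.inl hp) (Or.inr hq) (by linarith) ht0 (by ring)
      have hβα : β ≤ α := by
        by_contra hcon
        push_neg at hcon
        set t := (α + β) / 2 with ht
        have ht0 : 0 ≤ t := by rw [ht]; linarith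
        have ht1 : t ≤ 1 := by rw [ht]; linarith
        rcases hcover t ht0 ht1 with h | h
        · have := hubP t ht0 ht1 h; rw [ht] at this; linarith
        · have := hlbQ t ht0 ht1 h; rw [ht] at this; linarith
      have hfαQ : f α ∈ Q := by
        have h1T : (1:ℚ) ∈ {t : ℚ | f t ∈ Q} := by rw [Set.mem_setOf_eq, hf1]; exact hq
        exact hTQconv.ordConnected.out hfβQ h1T ⟨hβα, hα1⟩
      refine ⟨(1 - α) • q + α • p, ?_, f α, ⟨hfαP, hfαQ⟩, ?_⟩
      · exact hUconv (Or.inr hq) (Or.inl hp) (by linarith) hα0 (by ring)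
      · funext k
        simp only [hf, hd, Pi.add_apply, Pi.smul_apply, smul_eq_mul]
        ring
end

section
/- Let P and Q be nonempty compact convex sets in ℝ^n whose union is convex. Then the support function of P ∩ Q equals the pointwise minimum of the support functions of P and Q: for all x, h_{P∩Q}(x) = min(h_P(x), h_Q(x)). -/
open RealInnerProductSpace

/-- The support function of a set `K ⊆ ℝ^n`: `h_K(x) = sup {⟪x, v⟫ : v ∈ K}`. -/
noncomputable def supportFn {n : ℕ} (K : Set (EuclideanSpace ℝ (Fin n)))
    (x : EuclideanSpace ℝ (Fin n)) : ℝ :=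
  sSup ((fun v => ⟪x, v⟫) '' K)

/-- For nonempty compact convex `P, Q ⊆ ℝ^n` with `P ∪ Q` convex,
`h_{P ∩ Q}(x) = min (h_P(x)) (h_Q(x))` for all `x`. -/
theorem supportFn_inter_eq_min {n : ℕ} (P Q : Set (EuclideanSpace ℝ (Fin n)))
    (hPc : IsCompact P) (hQc : IsCompact Q) (hPv : Convex ℝ P) (hQv : Convex ℝ Q)
    (hPne : P.Nonempty) (hQne : Q.Nonempty) (hU : Convex ℝ (P ∪ Q)) :
    ∀ x : EuclideanSpace ℝ (Fin n),
      supportFn (P ∩ Q) x = min (supportFn P x) (supportFn Q x) := by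
  intro x
  have hcont : Continuous fun v : EuclideanSpace ℝ (Fin n) => ⟪x, v⟫ :=
    (innerSL ℝ x).continuous
  obtain ⟨p, hpP, hpmax⟩ := hPc.exists_isMaxOn hPne hcont.continuousOn
  obtain ⟨q, hqQ, hqmax⟩ := hQc.exists_isMaxOn hQne hcont.continuousOn
  -- the segment [p,q] lies in P ∪ Q and meets P ∩ Q
  have hseg : segment ℝ p q ⊆ P ∪ Q := hU.segment_subset (Or.inl hpP) (Or.inr hqQ)
  have hpre : IsPreconnected (segment ℝ p q) := (convex_segment p q).isPreconnected
  rw [isPreconnected_closed_iff] at hpre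
  obtain ⟨z, hzseg, hzP, hzQ⟩ :=
    hpre P Q hPc.isClosed hQc.isClosed hseg
      ⟨p, left_mem_segment ℝ p q, hpP⟩ ⟨q, right_mem_segment ℝ p q, hqQ⟩
  obtain ⟨a, b, ha, hb, hab, hzdef⟩ := hzseg
  -- support function values
  have hP_eq : supportFn P x = ⟪x, p⟫ :=
    IsGreatest.csSup_eq ⟨Set.mem_image_of_mem _ hpP, by
      rintro y ⟨v, hv, rfl⟩; exact hpmax hv⟩
  have hQ_eq : supportFn Q x = ⟪x, q⟫ :=
    IsGreatest.csSup_eq ⟨Set.mem_image_of_mem _ hqQ, by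
      rintro y ⟨v, hv, rfl⟩; exact hqmax hv⟩
  have hbdd : BddAbove ((fun v => ⟪x, v⟫) '' (P ∩ Q)) := by
    refine ⟨⟪x, p⟫, ?_⟩
    rintro y ⟨v, hv, rfl⟩
    exact hpmax hv.1
  have hz_ge : min ⟪x, p⟫ ⟪x, q⟫ ≤ ⟪x, z⟫ := by
    rw [← hzdef, inner_add_right, real_inner_smul_right, real_inner_smul_right]
    have h1 : min ⟪x, p⟫ ⟪x, q⟫ ≤ ⟪x, p⟫ := min_le_left _ _
    have h2 : min ⟪x, p⟫ ⟪x, q⟫ ≤ ⟪x, q⟫ := min_le_right _ _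
    calc min ⟪x, p⟫ ⟪x, q⟫ = a * min ⟪x, p⟫ ⟪x, q⟫ + b * min ⟪x, p⟫ ⟪x, q⟫ := by
          rw [← add_mul, hab, one_mul]
      _ ≤ a * ⟪x, p⟫ + b * ⟪x, q⟫ :=
          add_le_add (mul_le_mul_of_nonneg_left h1 ha) (mul_le_mul_of_nonneg_left h2 hb)
  apply le_antisymm
  · refine csSup_le ⟨⟪x, z⟫, Set.mem_image_of_mem _ ⟨hzP, hzQ⟩⟩ ?_
    rintro y ⟨v, hv, rfl⟩
    exact le_min (hP_eq ▸ hpmax hv.1) (hQ_eq ▸ hqmax hv.2)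
  · calc min (supportFn P x) (supportFn Q x) = min ⟪x, p⟫ ⟪x, q⟫ := by rw [hP_eq, hQ_eq]
      _ ≤ ⟪x, z⟫ := hz_ge
      _ ≤ supportFn (P ∩ Q) x := le_csSup hbdd (Set.mem_image_of_mem _ ⟨hzP, hzQ⟩)
end

section
/- Let P and Q be nonempty compact convex sets in ℝ^n whose union is convex. Then h_{P∪Q}(x) + h_{P∩Q}(x) = h_P(x) + h_Q(x) for all x ∈ ℝ^n, i.e., max(h_P(x), h_Q(x)) + min(h_P(x), h_Q(x)) = h_P(x) + h_Q(x) and h_{P∪Q} = max(h_P, h_Q). -/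
open RealInnerProductSpace

/-- For nonempty compact convex `P, Q ⊆ ℝ^n` with `P ∪ Q` convex,
`h_{P∪Q} = max (h_P, h_Q)` and `h_{P∪Q}(x) + h_{P∩Q}(x) = h_P(x) + h_Q(x)` for all `x`. -/
theorem supportFn_union_add_inter {n : ℕ} (P Q : Set (EuclideanSpace ℝ (Fin n)))
    (hPc : IsCompact P) (hQc : IsCompact Q) (hPv : Convex ℝ P) (hQv : Convex ℝ Q)
    (hPne : P.Nonempty) (hQne : Q.Nonempty) (hU : Convex ℝ (P ∪ Q)) :
    ∀ x : EuclideanSpace ℝ (Fin n),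
      supportFn (P ∪ Q) x = max (supportFn P x) (supportFn Q x) ∧
      max (supportFn P x) (supportFn Q x) + min (supportFn P x) (supportFn Q x)
        = supportFn P x + supportFn Q x ∧
      supportFn (P ∪ Q) x + supportFn (P ∩ Q) x = supportFn P x + supportFn Q x := by
  intro x
  have hcont : Continuous fun v : EuclideanSpace ℝ (Fin n) => ⟪x, v⟫ :=
    continuous_const.inner continuous_id
  have hbP : BddAbove ((fun v => ⟪x, v⟫) '' P) := (hPc.image hcont).bddAbove
  have hbQ : BddAbove ((fun v => ⟪x, v⟫) '' Q) := (hQc.image hcont).bddAbove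
  have hneP : ((fun v => ⟪x, v⟫) '' P).Nonempty := hPne.image _
  have hneQ : ((fun v => ⟪x, v⟫) '' Q).Nonempty := hQne.image _
  have h1 : supportFn (P ∪ Q) x = max (supportFn P x) (supportFn Q x) := by
    unfold supportFn
    rw [Set.image_union, csSup_union hbP hneP hbQ hneQ]
  obtain ⟨p, hpP, hp⟩ := hPc.exists_sSup_image_eq hPne hcont.continuousOn
  obtain ⟨q, hqQ, hq⟩ := hQc.exists_sSup_image_eq hQne hcont.continuousOn
  have hseg : segment ℝ p q ⊆ P ∪ Q := hU.segment_subset (Or.inl hpP) (Or.inr hqQ)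
  have hconn : IsPreconnected (segment ℝ p q) := (convex_segment p q).isPreconnected
  obtain ⟨z, hzseg, hzP, hzQ⟩ :=
    isPreconnected_closed_iff.mp hconn P Q hPc.isClosed hQc.isClosed hseg
      ⟨p, left_mem_segment ℝ p q, hpP⟩ ⟨q, right_mem_segment ℝ p q, hqQ⟩
  obtain ⟨a, b, ha, hb, hab, hz⟩ := hzseg
  have hzval : ⟪x, z⟫ = a * ⟪x, p⟫ + b * ⟪x, q⟫ := by
    rw [← hz, inner_add_right, real_inner_smul_right, real_inner_smul_right]
  have hpval : supportFn P x = ⟪x, p⟫ := hp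
  have hqval : supportFn Q x = ⟪x, q⟫ := hq
  have hzmin : min (supportFn P x) (supportFn Q x) ≤ ⟪x, z⟫ := by
    rw [hzval, hpval, hqval]
    have h1' := mul_le_mul_of_nonneg_left (min_le_left (⟪x, p⟫ : ℝ) ⟪x, q⟫) ha
    have h2' := mul_le_mul_of_nonneg_left (min_le_right (⟪x, p⟫ : ℝ) ⟪x, q⟫) hb
    have h3 : a * min (⟪x, p⟫ : ℝ) ⟪x, q⟫ + b * min (⟪x, p⟫ : ℝ) ⟪x, q⟫
        = min (⟪x, p⟫ : ℝ) ⟪x, q⟫ := by rw [← add_mul, hab, one_mul]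
    linarith
  have hbI : BddAbove ((fun v => ⟪x, v⟫) '' (P ∩ Q)) :=
    hbP.mono (Set.image_mono Set.inter_subset_left)
  have h2 : supportFn (P ∩ Q) x = min (supportFn P x) (supportFn Q x) := by
    apply le_antisymm
    · refine csSup_le ⟨_, ⟨z, ⟨hzP, hzQ⟩, rfl⟩⟩ ?_
      rintro r ⟨v, ⟨hvP, hvQ⟩, rfl⟩
      exact le_min (le_csSup hbP ⟨v, hvP, rfl⟩) (le_csSup hbQ ⟨v, hvQ, rfl⟩)
    · exact le_trans hzmin (le_csSup hbI ⟨z, ⟨hzP, hzQ⟩, rfl⟩)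
  exact ⟨h1, max_add_min _ _, by rw [h1, h2, max_add_min]⟩
end

section
/- Let N be an abelian group and let A, B, C be subgroups of N such that all the index expressions below are finite. Then [N : A+C]·[N : B+(A∩C)] = [N : A+B]·[N : (A∩B)+C]. -/
open AddSubgroup

/-- Modular law for subgroups of an abelian group. -/
lemma modular_aux {N : Type*} [AddCommGroup N] (A B C : AddSubgroup N) :
    A ⊓ (B ⊔ (A ⊓ C)) = (A ⊓ B) ⊔ (A ⊓ C) := by
  apply le_antisymm
  · intro x hx
    rw [AddSubgroup.mem_inf] at hx
    obtain ⟨hxA, hx⟩ := hx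
    rw [AddSubgroup.mem_sup] at hx ⊢
    obtain ⟨b, hb, d, hd, rfl⟩ := hx
    exact ⟨b, ⟨by simpa using sub_mem hxA hd.1, hb⟩, d, hd, rfl⟩
  · exact sup_le (le_inf inf_le_left (le_trans inf_le_right le_sup_left))
      (le_inf inf_le_left le_sup_right)

/-- For subgroups `A, B, C` of an abelian group `N` with all four indices finite,
`[N : A+C]·[N : B+(A∩C)] = [N : A+B]·[N : (A∩B)+C]`. -/
theorem index_product_identity {N : Type*} [AddCommGroup N] (A B C : AddSubgroup N)
    (h1 : (A ⊔ C).index ≠ 0) (h2 : (B ⊔ (A ⊓ C)).index ≠ 0)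
    (h3 : (A ⊔ B).index ≠ 0) (h4 : ((A ⊓ B) ⊔ C).index ≠ 0) :
    (A ⊔ C).index * (B ⊔ (A ⊓ C)).index = (A ⊔ B).index * ((A ⊓ B) ⊔ C).index := by
  have h23 : (B ⊔ (A ⊓ C)) ≤ A ⊔ B :=
    sup_le le_sup_right (le_trans inf_le_left le_sup_left)
  have h41 : ((A ⊓ B) ⊔ C) ≤ A ⊔ C :=
    sup_le (le_trans inf_le_left le_sup_left) le_sup_right
  have e2 := AddSubgroup.relIndex_mul_index h23
  have e4 := AddSubgroup.relIndex_mul_index h41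
  have key : (B ⊔ (A ⊓ C)).relIndex (A ⊔ B) = ((A ⊓ B) ⊔ C).relIndex (A ⊔ C) := by
    have hAB : A ⊔ B = A ⊔ (B ⊔ (A ⊓ C)) := by
      rw [← sup_assoc]
      exact (sup_eq_left.2 (le_trans inf_le_left le_sup_left)).symm
    have hAC : A ⊔ C = A ⊔ ((A ⊓ B) ⊔ C) := by
      rw [sup_comm (A ⊓ B) C, ← sup_assoc]
      exact (sup_eq_left.2 (le_trans inf_le_left le_sup_left)).symm
    have hE1 : A ⊓ (B ⊔ (A ⊓ C)) = (A ⊓ B) ⊔ (A ⊓ C) := modular_aux A B C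
    have hE2 : A ⊓ ((A ⊓ B) ⊔ C) = (A ⊓ B) ⊔ (A ⊓ C) := by
      rw [sup_comm (A ⊓ B) C, modular_aux A C B, sup_comm]
    rw [hAB, hAC, AddSubgroup.relIndex_sup_right, AddSubgroup.relIndex_sup_right,
      ← AddSubgroup.inf_relIndex_left A (B ⊔ (A ⊓ C)),
      ← AddSubgroup.inf_relIndex_left A ((A ⊓ B) ⊔ C), hE1, hE2]
  rw [← e2, ← e4, key]
  ring
end

section
/- Let k be a field, I an ideal of k[x₁,…,xₙ] with n ≥ 1, and ω ∈ ℝⁿ with ω₁ = 0. Viewing ideals in k(α)[x₁,…,xₙ] with α transcendental over k, we have in_ω(I·k(α)[x] + ⟨x₁ − α⟩) = in_ω(I·k(α)[x]) + in_ω(⟨x₁ − α⟩) = in_ω(I·k(α)[x]) + ⟨x₁ − α⟩. -/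
open scoped Classical

/-- The weight of an exponent vector `v` with respect to `ω ∈ ℝⁿ`. -/
noncomputable def expWeight {m : ℕ} (ω : Fin m → ℝ) (v : Fin m →₀ ℕ) : ℝ :=
  ∑ i, (v i : ℝ) * ω i

/-- The initial form `in_ω(f)`: the sum of the terms of `f` of maximal `ω`-weight. -/
noncomputable def initialForm {m : ℕ} {R : Type*} [CommRing R] (ω : Fin m → ℝ)
    (f : MvPolynomial (Fin m) R) : MvPolynomial (Fin m) R :=
  ∑ v ∈ f.support.filter (fun v => ∀ u ∈ f.support, expWeight ω u ≤ expWeight ω v),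
    MvPolynomial.monomial v (MvPolynomial.coeff v f)

/-- The initial ideal `in_ω(I)`, generated by the initial forms of nonzero elements of `I`. -/
noncomputable def initialIdeal {m : ℕ} {R : Type*} [CommRing R] (ω : Fin m → ℝ)
    (I : Ideal (MvPolynomial (Fin m) R)) : Ideal (MvPolynomial (Fin m) R) :=
  Ideal.span {g | ∃ f ∈ I, f ≠ 0 ∧ g = initialForm ω f}

namespace Aux

open MvPolynomial

variable {m : ℕ} (ω : Fin m → ℝ)

lemma expWeight_add (u v : Fin m →₀ ℕ) :
    expWeight ω (u + v) = expWeight ω u + expWeight ω v := by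
  simp [expWeight, Finsupp.add_apply, add_mul, Finset.sum_add_distrib]

lemma expWeight_single [NeZero m] (hω : ω 0 = 0) (j : ℕ) :
    expWeight ω (Finsupp.single (0 : Fin m) j) = 0 := by
  rw [expWeight, Finset.sum_eq_single 0]
  · simp [hω]
  · intro b _ hb
    simp [Finsupp.single_apply, (by simpa using hb.symm : ¬ ((0:Fin m) = b))]
  · simp

variable {R : Type*} [CommRing R]

lemma coeff_initialForm (f : MvPolynomial (Fin m) R) (v : Fin m →₀ ℕ) :
    (initialForm ω f).coeff v =
      if ∀ u ∈ f.support, expWeight ω u ≤ expWeight ω v then f.coeff v else 0 := by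
  classical
  unfold initialForm
  rw [MvPolynomial.coeff_sum]
  simp only [MvPolynomial.coeff_monomial]
  rw [Finset.sum_ite_eq' (f.support.filter _) v (fun v => f.coeff v)]
  by_cases hc : ∀ u ∈ f.support, expWeight ω u ≤ expWeight ω v
  · rw [if_pos hc]
    by_cases hv : v ∈ f.support
    · rw [if_pos (Finset.mem_filter.mpr ⟨hv, hc⟩)]
    · rw [if_neg (fun h => hv (Finset.mem_filter.mp h).1),
        MvPolynomial.notMem_support_iff.mp hv]
  · rw [if_neg hc, if_neg (fun h => hc (Finset.mem_filter.mp h).2)]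
  
end Aux

namespace Aux2
open MvPolynomial Aux

variable {m : ℕ} (ω : Fin m → ℝ) {R : Type*} [CommRing R]

lemma initialForm_zero : initialForm ω (0 : MvPolynomial (Fin m) R) = 0 := by
  ext v; rw [coeff_initialForm]; simp

/-- Lemma D: if `f = p + q` with `p ≠ 0` weight-homogeneous of weight `W` and all
terms of `q` of weight `< W`, then `in_ω f = p`. -/
lemma initialForm_eq_of_decomp {f p q : MvPolynomial (Fin m) R} {W : ℝ}
    (hf : f = p + q) (hp : p ≠ 0)
    (hpW : ∀ v ∈ p.support, expWeight ω v = W)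
    (hqW : ∀ v ∈ q.support, expWeight ω v < W) :
    initialForm ω f = p := by
  classical
  have hfc : ∀ v, f.coeff v = p.coeff v + q.coeff v := by
    intro v; rw [hf, MvPolynomial.coeff_add]
  have hfW : ∀ u ∈ f.support, expWeight ω u ≤ W := by
    intro u hu
    have := MvPolynomial.support_add (p := p) (q := q) (hf ▸ hu)
    rcases Finset.mem_union.mp this with h | h
    · exact (hpW u h).le
    · exact (hqW u h).le
  obtain ⟨v₀, hv₀⟩ := MvPolynomial.ne_zero_iff.mp hp
  have hv₀s : v₀ ∈ p.support := MvPolynomial.mem_support_iff.mpr hv₀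
  have hv₀W : expWeight ω v₀ = W := hpW v₀ hv₀s
  have hqv₀ : q.coeff v₀ = 0 := by
    by_contra h
    exact absurd (hv₀W ▸ hqW v₀ (MvPolynomial.mem_support_iff.mpr h)) (lt_irrefl W)
  have hfv₀ : f.coeff v₀ = p.coeff v₀ := by rw [hfc, hqv₀, add_zero]
  have hv₀f : v₀ ∈ f.support := by
    rw [MvPolynomial.mem_support_iff, hfv₀]; exact hv₀
  ext v
  rw [coeff_initialForm]
  by_cases hW : expWeight ω v = W
  · have hc : ∀ u ∈ f.support, expWeight ω u ≤ expWeight ω v := fun u hu => hW ▸ hfW u hu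
    rw [if_pos hc, hfc]
    have : q.coeff v = 0 := by
      by_contra h
      exact absurd (hW ▸ hqW v (MvPolynomial.mem_support_iff.mpr h)) (lt_irrefl W)
    rw [this, add_zero]
  · have hpv : p.coeff v = 0 := by
      by_contra h
      exact hW (hpW v (MvPolynomial.mem_support_iff.mpr h))
    rw [hpv]
    split_ifs with hc
    · by_cases hvf : v ∈ f.support
      · exact absurd (le_antisymm (hfW v hvf) (hv₀W ▸ hc v₀ hv₀f)) hW
      · exact MvPolynomial.notMem_support_iff.mp hvf
    · rfl

/-- The decomposition of a nonzero `f` into its initial form and lower-weight rest. -/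
lemma decomp {f : MvPolynomial (Fin m) R} (hf : f ≠ 0) :
    ∃ W : ℝ, initialForm ω f ≠ 0 ∧
      (∀ v ∈ (initialForm ω f).support, expWeight ω v = W) ∧
      (∀ v ∈ (f - initialForm ω f).support, expWeight ω v < W) ∧
      (∀ v ∈ f.support, expWeight ω v ≤ W) := by
  classical
  have hs : f.support.Nonempty := MvPolynomial.support_nonempty.mpr hf
  have hsi : (f.support.image (expWeight ω)).Nonempty := hs.image _
  set W := (f.support.image (expWeight ω)).max' hsi with hWdef
  obtain ⟨v₀, hv₀s, hv₀W⟩ := Finset.mem_image.mp ((f.support.image (expWeight ω)).max'_mem hsi)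
  rw [← hWdef] at hv₀W
  have hle : ∀ v ∈ f.support, expWeight ω v ≤ W := fun v hv =>
    Finset.le_max' _ _ (Finset.mem_image_of_mem _ hv)
  have hcond : ∀ v, (∀ u ∈ f.support, expWeight ω u ≤ expWeight ω v) ↔
      (expWeight ω v = W ∨ (W < expWeight ω v)) := by
    intro v
    constructor
    · intro h
      rcases lt_or_ge W (expWeight ω v) with h' | h'
      · exact Or.inr h'
      · exact Or.inl (le_antisymm (hv₀W ▸ h v₀ hv₀s) h').symm  -- careful
    · rintro (h | h) <;> intro u hu
      · exact h ▸ hle u hu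
      · exact (hle u hu).trans h.le
  refine ⟨W, ?_, ?_, ?_, hle⟩
  · intro h0
    have : (initialForm ω f).coeff v₀ = 0 := by rw [h0]; simp
    rw [coeff_initialForm, if_pos] at this
    · exact MvPolynomial.mem_support_iff.mp hv₀s this
    · intro u hu; rw [hv₀W]; exact hle u hu
  · intro v hv
    rw [MvPolynomial.mem_support_iff, coeff_initialForm] at hv
    split_ifs at hv with hc
    · have hvf : v ∈ f.support := MvPolynomial.mem_support_iff.mpr hv
      exact le_antisymm (hle v hvf) (hv₀W ▸ hc v₀ hv₀s)
    · exact absurd rfl hv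
  · intro v hv
    rw [MvPolynomial.mem_support_iff, MvPolynomial.coeff_sub, coeff_initialForm] at hv
    split_ifs at hv with hc
    · exact absurd (sub_self _) hv
    · push_neg at hc
      obtain ⟨u, hu, huv⟩ := hc
      rw [sub_zero] at hv
      exact lt_of_lt_of_le huv (hle u hu)

end Aux2

namespace Aux3
open MvPolynomial Aux Aux2

variable {m : ℕ} (ω : Fin m → ℝ) {R : Type*} [CommRing R]

/-- The initial form of a weight-homogeneous polynomial is itself. -/
lemma initialForm_of_homog {p : MvPolynomial (Fin m) R} {W : ℝ} (hp : p ≠ 0)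
    (hpW : ∀ v ∈ p.support, expWeight ω v = W) :
    initialForm ω p = p := by
  apply initialForm_eq_of_decomp ω (q := 0) (by rw [add_zero]) hp hpW
  simp

/-- Multiplying by a weight-0-homogeneous polynomial commutes with initial forms. -/
lemma initialForm_mul_homog0 [IsDomain R] {g h : MvPolynomial (Fin m) R}
    (hg : g ≠ 0) (hg0 : ∀ v ∈ g.support, expWeight ω v = 0) (hh : h ≠ 0) :
    initialForm ω (h * g) = initialForm ω h * g := by
  classical
  obtain ⟨W, hne, hW, hlt, _⟩ := decomp ω hh
  apply initialForm_eq_of_decomp ω (q := (h - initialForm ω h) * g)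
    (by ring) (mul_ne_zero hne hg)
  · intro v hv
    obtain ⟨a, ha, b, hb, rfl⟩ := Finset.mem_add.mp (MvPolynomial.support_mul _ _ hv)
    rw [expWeight_add, hW a ha, hg0 b hb, add_zero]
  · intro v hv
    obtain ⟨a, ha, b, hb, rfl⟩ := Finset.mem_add.mp (MvPolynomial.support_mul _ _ hv)
    rw [expWeight_add, hg0 b hb, add_zero]
    exact hlt a ha

/-- Initial forms commute with coefficient maps having injective coefficient hom. -/
lemma initialForm_map {S : Type*} [CommRing S] {φ : R →+* S} (hφ : Function.Injective φ)
    (f : MvPolynomial (Fin m) R) :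
    initialForm ω (MvPolynomial.map φ f) = MvPolynomial.map φ (initialForm ω f) := by
  classical
  have hsupp : (MvPolynomial.map φ f).support = f.support :=
    MvPolynomial.support_map_of_injective _ hφ
  ext v
  rw [coeff_initialForm, MvPolynomial.coeff_map, MvPolynomial.coeff_map, coeff_initialForm,
    hsupp]
  split_ifs
  · rfl
  · rw [map_zero]

lemma expWeight_zero : expWeight ω (0 : Fin m →₀ ℕ) = 0 := by
  simp [expWeight]

lemma support_C_eq_zero {a : R} {v : Fin m →₀ ℕ}
    (hv : v ∈ (MvPolynomial.C a : MvPolynomial (Fin m) R).support) : v = 0 := by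
  rw [MvPolynomial.C_apply, MvPolynomial.support_monomial] at hv
  split_ifs at hv
  · simp at hv
  · exact Finset.mem_singleton.mp hv

lemma initialIdeal_mono {I J : Ideal (MvPolynomial (Fin m) R)} (h : I ≤ J) :
    initialIdeal ω I ≤ initialIdeal ω J := by
  apply Ideal.span_mono
  rintro g ⟨f, hf, hf0, rfl⟩
  exact ⟨f, h hf, hf0, rfl⟩

lemma mem_initialIdeal_of_mem {I : Ideal (MvPolynomial (Fin m) R)}
    {f : MvPolynomial (Fin m) R} (hf : f ∈ I) (hf0 : f ≠ 0) :
    initialForm ω f ∈ initialIdeal ω I :=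
  Ideal.subset_span ⟨f, hf, hf0, rfl⟩

end Aux3

namespace Aux4
open MvPolynomial Aux Aux2 Aux3

variable {k : Type*} [Field k] {m : ℕ} [NeZero m]

/-- The substitution `α ↦ x₀` from `k[α][x]` to `k[x]`. -/
noncomputable def sig (k : Type*) [Field k] (m : ℕ) [NeZero m] :
    MvPolynomial (Fin m) (Polynomial k) →+* MvPolynomial (Fin m) k :=
  MvPolynomial.eval₂Hom (Polynomial.aeval (MvPolynomial.X 0 :
    MvPolynomial (Fin m) k)).toRingHom MvPolynomial.X

lemma sig_C (p : Polynomial k) :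
    sig k m (MvPolynomial.C p) = Polynomial.aeval (MvPolynomial.X 0) p := by
  simp [sig]

lemma sig_X (i : Fin m) : sig k m (MvPolynomial.X i) = MvPolynomial.X i := by
  simp [sig]

lemma sig_comp_iota :
    (sig k m).comp (MvPolynomial.map (Polynomial.C : k →+* Polynomial k)) =
      RingHom.id _ := by
  apply MvPolynomial.ringHom_ext
  · intro a
    simp [sig_C]
  · intro i
    simp [sig_X]

lemma sig_iota (q : MvPolynomial (Fin m) k) :
    sig k m (MvPolynomial.map (Polynomial.C : k →+* Polynomial k) q) = q := by
  have := congrArg (fun φ => φ q) sig_comp_iota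
  simpa using this

/-- `F ≡ σ(F) mod (x₀ - α)` in `k[α][x]`. -/
lemma key_congr (F : MvPolynomial (Fin m) (Polynomial k)) :
    F - MvPolynomial.map (Polynomial.C : k →+* Polynomial k) (sig k m F) ∈
      Ideal.span {MvPolynomial.X 0 - MvPolynomial.C Polynomial.X} := by
  classical
  set Jp : Ideal (MvPolynomial (Fin m) (Polynomial k)) :=
    Ideal.span {MvPolynomial.X 0 - MvPolynomial.C Polynomial.X} with hJp
  have hgen : MvPolynomial.X 0 - MvPolynomial.C Polynomial.X ∈ Jp :=
    Ideal.subset_span rfl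
  have hXC : Ideal.Quotient.mk Jp (MvPolynomial.X 0) =
      Ideal.Quotient.mk Jp (MvPolynomial.C Polynomial.X) := by
    rw [Ideal.Quotient.mk_eq_mk_iff_sub_mem]
    exact hgen
  have hcomp : (Ideal.Quotient.mk Jp).comp
      ((MvPolynomial.map (Polynomial.C : k →+* Polynomial k)).comp (sig k m)) =
      Ideal.Quotient.mk Jp := by
    apply MvPolynomial.ringHom_ext
    · intro p
      simp only [RingHom.comp_apply, sig_C]
      have hext : (Ideal.Quotient.mk Jp).comp ((MvPolynomial.map
            (Polynomial.C : k →+* Polynomial k)).comp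
            ((Polynomial.aeval (MvPolynomial.X 0 :
              MvPolynomial (Fin m) k)).toRingHom)) =
          (Ideal.Quotient.mk Jp).comp
            (MvPolynomial.C : Polynomial k →+* MvPolynomial (Fin m) (Polynomial k)) := by
        apply Polynomial.ringHom_ext
        · intro a
          simp [MvPolynomial.algebraMap_eq]
        · simpa using hXC
      have := congrArg (fun φ => φ p) hext
      simpa using this
    · intro i
      simp [sig_X]
  have := congrArg (fun φ => φ F) hcomp
  simp only [RingHom.comp_apply] at this
  rw [← Ideal.Quotient.mk_eq_mk_iff_sub_mem]
  exact this.symm ▸ rfl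

end Aux4

namespace Aux5
open MvPolynomial Aux Aux2 Aux3 Aux4

variable {k : Type*} [Field k] {m : ℕ} [NeZero m] {ω : Fin m → ℝ}

lemma aeval_X0_support (hω : ω 0 = 0) (p : Polynomial k) :
    ∀ v ∈ (Polynomial.aeval (MvPolynomial.X 0 : MvPolynomial (Fin m) k) p).support,
      expWeight ω v = 0 := by
  classical
  induction p using Polynomial.induction_on' with
  | add p q hp hq =>
      intro v hv
      rw [map_add] at hv
      rcases Finset.mem_union.mp (MvPolynomial.support_add hv) with h | h
      · exact hp v h
      · exact hq v h
  | monomial n a =>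
      intro v hv
      rw [Polynomial.aeval_monomial, MvPolynomial.algebraMap_eq,
        MvPolynomial.X_pow_eq_monomial, MvPolynomial.C_mul_monomial,
        MvPolynomial.support_monomial] at hv
      split_ifs at hv
      · simp at hv
      · rw [Finset.mem_singleton.mp hv]
        exact expWeight_single ω hω n

lemma sig_monomial (u : Fin m →₀ ℕ) (c : Polynomial k) :
    sig k m (MvPolynomial.monomial u c) =
      Polynomial.aeval (MvPolynomial.X 0) c * MvPolynomial.monomial u (1 : k) := by
  classical
  have h1 : MvPolynomial.monomial u c = MvPolynomial.C c * MvPolynomial.monomial u 1 := by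
    rw [MvPolynomial.C_mul_monomial, mul_one]
  have h2 : sig k m (MvPolynomial.monomial u (1 : Polynomial k)) =
      MvPolynomial.monomial u (1 : k) := by
    simp [MvPolynomial.monomial_eq, map_finsuppProd, sig_X]
  rw [h1, map_mul, sig_C, h2]

lemma sig_weight (hω : ω 0 = 0) (F : MvPolynomial (Fin m) (Polynomial k)) :
    ∀ v ∈ (sig k m F).support, ∃ u ∈ F.support, expWeight ω v = expWeight ω u := by
  classical
  intro v hv
  have hF : sig k m F =
      ∑ u ∈ F.support, sig k m (MvPolynomial.monomial u (F.coeff u)) := by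
    conv_lhs => rw [← MvPolynomial.support_sum_monomial_coeff F]
    rw [map_sum]
  rw [hF] at hv
  obtain ⟨u, hu, hv'⟩ := Finset.mem_biUnion.mp (MvPolynomial.support_sum hv)
  refine ⟨u, hu, ?_⟩
  rw [sig_monomial] at hv'
  obtain ⟨a, ha, b, hb, rfl⟩ := Finset.mem_add.mp (MvPolynomial.support_mul _ _ hv')
  rw [MvPolynomial.support_monomial, if_neg one_ne_zero] at hb
  rw [Finset.mem_singleton.mp hb, expWeight_add, aeval_X0_support hω _ a ha, zero_add]

lemma clear_denom (h : MvPolynomial (Fin m) (RatFunc k)) :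
    ∃ (d : Polynomial k) (H : MvPolynomial (Fin m) (Polynomial k)), d ≠ 0 ∧
      MvPolynomial.map (algebraMap (Polynomial k) (RatFunc k)) H =
        MvPolynomial.C (algebraMap (Polynomial k) (RatFunc k) d) * h := by
  classical
  induction h using MvPolynomial.induction_on with
  | C a =>
      refine ⟨a.denom, MvPolynomial.C a.num, RatFunc.denom_ne_zero a, ?_⟩
      rw [MvPolynomial.map_C, ← MvPolynomial.C_mul]
      congr 1
      have h := RatFunc.num_div_denom a
      rw [div_eq_iff (RatFunc.algebraMap_ne_zero (RatFunc.denom_ne_zero a))] at h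
      rw [h, mul_comm]
  | add p q hp hq =>
      obtain ⟨d1, H1, hd1, hH1⟩ := hp
      obtain ⟨d2, H2, hd2, hH2⟩ := hq
      refine ⟨d1 * d2, MvPolynomial.C d2 * H1 + MvPolynomial.C d1 * H2,
        mul_ne_zero hd1 hd2, ?_⟩
      rw [map_add, map_mul, map_mul, MvPolynomial.map_C, MvPolynomial.map_C, hH1, hH2,
        map_mul, MvPolynomial.C_mul]
      ring
  | mul_X p i hp =>
      obtain ⟨d, H, hd, hH⟩ := hp
      exact ⟨d, H * MvPolynomial.X i, hd, by rw [map_mul, hH, MvPolynomial.map_X]; ring⟩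

end Aux5

namespace Aux6
open MvPolynomial Aux Aux2 Aux3 Aux4 Aux5

variable {k : Type*} [Field k] {m : ℕ} [NeZero m]

lemma clear_denom_mem (A : Ideal (MvPolynomial (Fin m) (Polynomial k)))
    {f : MvPolynomial (Fin m) (RatFunc k)}
    (hf : f ∈ Ideal.map (MvPolynomial.map (algebraMap (Polynomial k) (RatFunc k))) A) :
    ∃ (c : Polynomial k) (F : MvPolynomial (Fin m) (Polynomial k)), c ≠ 0 ∧ F ∈ A ∧
      MvPolynomial.map (algebraMap (Polynomial k) (RatFunc k)) F =
        MvPolynomial.C (algebraMap (Polynomial k) (RatFunc k) c) * f := by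
  classical
  refine Submodule.span_induction ?_ ?_ ?_ ?_ hf
  · rintro x ⟨F, hF, rfl⟩
    exact ⟨1, F, one_ne_zero, hF, by simp⟩
  · exact ⟨1, 0, one_ne_zero, A.zero_mem, by simp⟩
  · rintro x y _ _ ⟨c1, F1, hc1, hF1, he1⟩ ⟨c2, F2, hc2, hF2, he2⟩
    refine ⟨c1 * c2, MvPolynomial.C c2 * F1 + MvPolynomial.C c1 * F2,
      mul_ne_zero hc1 hc2, A.add_mem (A.mul_mem_left _ hF1) (A.mul_mem_left _ hF2), ?_⟩
    rw [map_add, map_mul, map_mul, MvPolynomial.map_C, MvPolynomial.map_C, he1, he2,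
      map_mul, MvPolynomial.C_mul]
    ring
  · rintro a x _ ⟨c, F, hc, hF, he⟩
    obtain ⟨d, H, hd, hH⟩ := clear_denom a
    refine ⟨d * c, H * F, mul_ne_zero hd hc, A.mul_mem_left _ hF, ?_⟩
    rw [smul_eq_mul, map_mul, hH, he, map_mul, MvPolynomial.C_mul]
    ring

end Aux6
namespace Main
open MvPolynomial Aux Aux2 Aux3 Aux4 Aux5 Aux6

variable {k : Type*} [Field k] {m : ℕ} [NeZero m]

theorem aux_main (I : Ideal (MvPolynomial (Fin m) k)) (ω : Fin m → ℝ) (hω : ω 0 = 0) :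
    initialIdeal ω (I.map (MvPolynomial.map (algebraMap k (RatFunc k))) ⊔
        Ideal.span {MvPolynomial.X 0 - MvPolynomial.C RatFunc.X})
        = initialIdeal ω (I.map (MvPolynomial.map (algebraMap k (RatFunc k)))) ⊔
          initialIdeal ω (Ideal.span {MvPolynomial.X 0 - MvPolynomial.C RatFunc.X}) ∧
      initialIdeal ω (I.map (MvPolynomial.map (algebraMap k (RatFunc k)))) ⊔
          initialIdeal ω (Ideal.span {MvPolynomial.X 0 - MvPolynomial.C RatFunc.X})
        = initialIdeal ω (I.map (MvPolynomial.map (algebraMap k (RatFunc k)))) ⊔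
          Ideal.span {MvPolynomial.X 0 - MvPolynomial.C RatFunc.X} := by
  classical
  set K := RatFunc k with hK
  set ι₁ : MvPolynomial (Fin m) k →+* MvPolynomial (Fin m) (Polynomial k) :=
    MvPolynomial.map (Polynomial.C : k →+* Polynomial k) with hι₁
  set ι₂ : MvPolynomial (Fin m) (Polynomial k) →+* MvPolynomial (Fin m) K :=
    MvPolynomial.map (algebraMap (Polynomial k) K) with hι₂
  set ι₃ : MvPolynomial (Fin m) k →+* MvPolynomial (Fin m) K :=
    MvPolynomial.map (algebraMap k K) with hι₃
  set dP : MvPolynomial (Fin m) (Polynomial k) :=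
    MvPolynomial.X 0 - MvPolynomial.C Polynomial.X with hdP
  set d : MvPolynomial (Fin m) K :=
    MvPolynomial.X 0 - MvPolynomial.C RatFunc.X with hd
  set I' : Ideal (MvPolynomial (Fin m) K) := I.map ι₃ with hI'
  set J : Ideal (MvPolynomial (Fin m) K) := Ideal.span {d} with hJ
  set Jp : Ideal (MvPolynomial (Fin m) (Polynomial k)) := Ideal.span {dP} with hJp
  set A : Ideal (MvPolynomial (Fin m) (Polynomial k)) := I.map ι₁ ⊔ Jp with hA
  -- basic facts
  have halg : (algebraMap k K) = (algebraMap (Polynomial k) K).comp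
      (Polynomial.C : k →+* Polynomial k) := by
    rw [IsScalarTower.algebraMap_eq k (Polynomial k) K, Polynomial.algebraMap_eq]
  have hcomp : ∀ p, ι₂ (ι₁ p) = ι₃ p := by
    intro p
    rw [hι₁, hι₂, hι₃, MvPolynomial.map_map, halg]
  have hinj2 : Function.Injective (algebraMap (Polynomial k) K) :=
    RatFunc.algebraMap_injective k
  have hinj3 : Function.Injective (algebraMap k K) := (algebraMap k K).injective
  have hd2 : ι₂ dP = d := by
    rw [hdP, hd, map_sub, hι₂, MvPolynomial.map_X, MvPolynomial.map_C, RatFunc.algebraMap_X]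
  have hcomphom : ι₂.comp ι₁ = ι₃ := RingHom.ext hcomp
  have hIJmap : I' ⊔ J = Ideal.map ι₂ A := by
    rw [hA, Ideal.map_sup, Ideal.map_map, hcomphom, hJp, Ideal.map_span,
      Set.image_singleton, hd2]
  have hd_ne : d ≠ 0 := by
    intro h
    have h1 := congrArg (MvPolynomial.coeff (Finsupp.single (0 : Fin m) 1)) h
    rw [hd, MvPolynomial.coeff_sub, MvPolynomial.coeff_zero, MvPolynomial.coeff_X,
      MvPolynomial.coeff_C,
      if_neg (by simp [eq_comm, Finsupp.single_eq_zero] :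
        ¬(0 : Fin m →₀ ℕ) = Finsupp.single (0 : Fin m) 1), sub_zero] at h1
    simp at h1
  have hd0 : ∀ v ∈ d.support, expWeight ω v = 0 := by
    intro v hv
    rw [hd, sub_eq_add_neg] at hv
    rcases Finset.mem_union.mp (MvPolynomial.support_add hv) with h | h
    · rw [MvPolynomial.support_X] at h
      rw [Finset.mem_singleton.mp h]
      exact expWeight_single ω hω 1
    · rw [MvPolynomial.support_neg] at h
      rw [support_C_eq_zero h]
      exact expWeight_zero ω
  -- σ maps A into I
  have hsig : ∀ F ∈ A, sig k m F ∈ I := by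
    intro F hF
    have hle : A ≤ Ideal.comap (sig k m) I := by
      rw [hA]
      refine sup_le ?_ ?_
      · rw [Ideal.map_le_iff_le_comap]
        intro p hp
        simp only [Ideal.mem_comap, hι₁, sig_iota]
        exact hp
      · rw [hJp, Ideal.span_le, Set.singleton_subset_iff]
        simp only [Ideal.mem_comap, hdP, map_sub, sig_X, sig_C, Polynomial.aeval_X, sub_self,
          SetLike.mem_coe]
        exact I.zero_mem
    exact hle hF
  -- part 2 : initialIdeal ω J = J
  have hJ2 : initialIdeal ω J = J := by
    apply le_antisymm
    · rw [initialIdeal, Ideal.span_le]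
      rintro g ⟨f, hfJ, hf0, rfl⟩
      rw [hJ] at hfJ
      obtain ⟨h, rfl⟩ := Ideal.mem_span_singleton.mp hfJ
      have hh : h ≠ 0 := fun h0 => hf0 (by rw [h0, mul_zero])
      rw [mul_comm, initialForm_mul_homog0 ω hd_ne hd0 hh]
      exact SetLike.mem_coe.mpr (Ideal.mem_span_singleton.mpr ⟨initialForm ω h, mul_comm _ _⟩)
    · rw [hJ, Ideal.span_le, Set.singleton_subset_iff]
      exact SetLike.mem_coe.mpr (Ideal.subset_span
        ⟨d, Ideal.subset_span rfl, hd_ne, (initialForm_of_homog ω hd_ne hd0).symm⟩)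
  -- main inclusion
  have hmain : initialIdeal ω (I' ⊔ J) ≤ initialIdeal ω I' ⊔ J := by
    rw [initialIdeal, Ideal.span_le]
    rintro g ⟨f, hfIJ, hf0, rfl⟩
    rw [hIJmap] at hfIJ
    obtain ⟨c, F, hc, hFA, hFe⟩ := clear_denom_mem A hfIJ
    have hu_ne : algebraMap (Polynomial k) K c ≠ 0 := RatFunc.algebraMap_ne_zero hc
    have hC_ne : (MvPolynomial.C (algebraMap (Polynomial k) K c) :
        MvPolynomial (Fin m) K) ≠ 0 := fun h => hu_ne (by
      simpa using congrArg (MvPolynomial.coeff 0) h)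
    have hC0 : ∀ v ∈ (MvPolynomial.C (algebraMap (Polynomial k) K c) :
        MvPolynomial (Fin m) K).support, expWeight ω v = 0 := by
      intro v hv
      rw [support_C_eq_zero hv]
      exact expWeight_zero ω
    have hF0 : F ≠ 0 := by
      intro h
      rw [h, map_zero] at hFe
      exact mul_ne_zero hC_ne hf0 hFe.symm
    set G := initialForm ω F with hG
    have hGmap : ι₂ G = initialForm ω (ι₂ F) := by
      rw [hG, hι₂, initialForm_map ω hinj2]
    have h_if : initialForm ω f * MvPolynomial.C (algebraMap (Polynomial k) K c) = ι₂ G := by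
      rw [hGmap, hFe, mul_comm (MvPolynomial.C _) f, initialForm_mul_homog0 ω hC_ne hC0 hf0]
    suffices hGmem : ι₂ G ∈ initialIdeal ω I' ⊔ J by
      have hinv : (MvPolynomial.C (algebraMap (Polynomial k) K c) :
          MvPolynomial (Fin m) K) * MvPolynomial.C (algebraMap (Polynomial k) K c)⁻¹ = 1 := by
        rw [← MvPolynomial.C_mul, mul_inv_cancel₀ hu_ne, MvPolynomial.C_1]
      have : initialForm ω f = ι₂ G * MvPolynomial.C (algebraMap (Polynomial k) K c)⁻¹ := by
        rw [← h_if, mul_assoc, hinv, mul_one]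
      rw [this]
      exact SetLike.mem_coe.mpr (Ideal.mul_mem_right _ _ hGmem)
    by_cases hσ : sig k m G = 0
    · apply Ideal.mem_sup_right
      have hmem : G ∈ Jp := by
        have := key_congr (m := m) G
        rw [hσ, map_zero, sub_zero] at this
        exact this
      have : ι₂ G ∈ Ideal.map ι₂ Jp := Ideal.mem_map_of_mem _ hmem
      rw [hJp, Ideal.map_span, Set.image_singleton, hd2] at this
      exact this
    · obtain ⟨W, hGne, hGW, hrest, _⟩ := decomp ω hF0
      have h_sF : initialForm ω (sig k m F) = sig k m G := by
        apply initialForm_eq_of_decomp ω (q := sig k m F - sig k m G) (by ring) hσ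
        · intro v hv
          obtain ⟨u, hu, he⟩ := sig_weight hω G v hv
          rw [he]
          exact hGW u hu
        · intro v hv
          rw [← map_sub] at hv
          obtain ⟨u, hu, he⟩ := sig_weight hω (F - G) v hv
          rw [he]
          exact hrest u hu
      have h_sFI : sig k m F ∈ I := hsig F hFA
      have h_sF0 : sig k m F ≠ 0 := by
        intro h
        rw [h, initialForm_zero] at h_sF
        exact hσ h_sF.symm
      have h3ne : ι₃ (sig k m F) ≠ 0 := by
        intro h
        exact h_sF0 (MvPolynomial.map_injective _ hinj3 (by rw [h, map_zero]))
      have h_in3 : initialForm ω (ι₃ (sig k m F)) = ι₃ (sig k m G) := by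
        rw [hι₃, initialForm_map ω hinj3, h_sF]
      have mem1 : ι₃ (sig k m G) ∈ initialIdeal ω I' := by
        rw [← h_in3]
        exact mem_initialIdeal_of_mem ω (Ideal.mem_map_of_mem _ h_sFI) h3ne
      have mem2 : ι₂ G - ι₃ (sig k m G) ∈ J := by
        have hkc : G - ι₁ (sig k m G) ∈ Jp := key_congr (m := m) G
        have := Ideal.mem_map_of_mem ι₂ hkc
        rw [map_sub, hcomp] at this
        rw [hJp, Ideal.map_span, Set.image_singleton, hd2] at this
        exact this
      have : ι₂ G = ι₃ (sig k m G) + (ι₂ G - ι₃ (sig k m G)) := by ring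
      rw [this]
      exact Ideal.add_mem _ (Ideal.mem_sup_left mem1) (Ideal.mem_sup_right mem2)
  constructor
  · apply le_antisymm
    · refine hmain.trans (le_of_eq ?_)
      rw [hJ2]
    · exact sup_le (initialIdeal_mono ω le_sup_left)
        ((initialIdeal_mono ω le_sup_right))
  · rw [hJ2]

end Main

/-- For an ideal `I ⊆ k[x₁,…,xₙ]`, `ω ∈ ℝⁿ` with `ω₁ = 0`, and `α`
transcendental over `k`, in `k(α)[x₁,…,xₙ]` one has
`in_ω(I·k(α)[x] + ⟨x₁ − α⟩) = in_ω(I·k(α)[x]) + in_ω(⟨x₁ − α⟩) = in_ω(I·k(α)[x]) + ⟨x₁ − α⟩`. -/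
theorem initialIdeal_sum_linear {k : Type*} [Field k] {n : ℕ}
    (I : Ideal (MvPolynomial (Fin (n + 1)) k)) (ω : Fin (n + 1) → ℝ) (hω : ω 0 = 0) :
    letI K := RatFunc k
    letI I' : Ideal (MvPolynomial (Fin (n + 1)) K) :=
      I.map (MvPolynomial.map (algebraMap k K))
    letI α : MvPolynomial (Fin (n + 1)) K := MvPolynomial.C RatFunc.X
    initialIdeal ω (I' ⊔ Ideal.span {MvPolynomial.X 0 - α})
        = initialIdeal ω I' ⊔ initialIdeal ω (Ideal.span {MvPolynomial.X 0 - α}) ∧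
      initialIdeal ω I' ⊔ initialIdeal ω (Ideal.span {MvPolynomial.X 0 - α})
        = initialIdeal ω I' ⊔ Ideal.span {MvPolynomial.X 0 - α} := by
  exact Main.aux_main I ω hω
end

section
/- Let I be an ideal of k[x₁,…,xₙ] (k algebraically closed) and let J = (I : (x₁⋯xₙ)^∞) ∩ k[x₁] be the elimination ideal of the saturation. Then J ≠ {0} if and only if the image of V(I) ∩ (k*)ⁿ under projection to the first coordinate is contained in a finite subset of k*. -/
/-- Let `k` be algebraically closed and `I ⊆ k[x₁,…,xₙ]` an ideal.  The
elimination ideal `J = (I : (x₁⋯xₙ)^∞) ∩ k[x₁]` is nonzero if and only if the image of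
`V(I) ∩ (k*)ⁿ` under projection to the first coordinate is a finite subset of `k*`. -/
theorem elimination_of_saturation_nonzero_iff {k : Type*} [Field k] [IsAlgClosed k] {n : ℕ}
    (I : Ideal (MvPolynomial (Fin (n + 1)) k)) :
    (∃ p : Polynomial k, p ≠ 0 ∧ ∃ m : ℕ,
        Polynomial.aeval (MvPolynomial.X 0 : MvPolynomial (Fin (n + 1)) k) p *
          (∏ i, MvPolynomial.X i) ^ m ∈ I)
      ↔ Set.Finite {y : k | ∃ x : Fin (n + 1) → k,
          (∀ f ∈ I, MvPolynomial.eval x f = 0) ∧ (∀ i, x i ≠ 0) ∧ x 0 = y} := by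
  have key : ∀ (x : Fin (n + 1) → k) (p : Polynomial k),
      MvPolynomial.eval x (Polynomial.aeval (MvPolynomial.X 0 :
        MvPolynomial (Fin (n + 1)) k) p) = Polynomial.eval (x 0) p := by
    intro x p
    rw [Polynomial.aeval_def, Polynomial.hom_eval₂]
    have : (MvPolynomial.eval x).comp (algebraMap k (MvPolynomial (Fin (n + 1)) k)) =
        RingHom.id k := by ext a; simp
    rw [this, MvPolynomial.eval_X]; rfl
  constructor
  · rintro ⟨p, hp, m, hmem⟩
    apply Set.Finite.subset (Polynomial.finite_setOf_isRoot hp)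
    rintro y ⟨x, hI, hx, rfl⟩
    have h0 := hI _ hmem
    rw [map_mul, map_pow, map_prod] at h0
    simp only [MvPolynomial.eval_X] at h0
    have hprod : (∏ i, x i) ^ m ≠ 0 := pow_ne_zero _ (Finset.prod_ne_zero_iff.2 fun i _ => hx i)
    have := mul_eq_zero.1 h0
    rcases this with h | h
    · rw [key] at h
      exact Set.mem_setOf.2 h
    · exact absurd h hprod
  · intro hfin
    set q : Polynomial k := ∏ y ∈ hfin.toFinset, (Polynomial.X - Polynomial.C y) with hq
    have hqne : q ≠ 0 := by
      apply Polynomial.Monic.ne_zero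
      exact Polynomial.monic_prod_of_monic _ _ fun y _ => Polynomial.monic_X_sub_C y
    set g : MvPolynomial (Fin (n + 1)) k :=
      Polynomial.aeval (MvPolynomial.X 0) q with hg
    have hvan : g * (∏ i, MvPolynomial.X i) ∈
        MvPolynomial.vanishingIdeal k (MvPolynomial.zeroLocus k I) := by
      rw [MvPolynomial.mem_vanishingIdeal_iff]
      intro x hx
      change ∀ p ∈ I, MvPolynomial.eval x p = 0 at hx
      change MvPolynomial.eval x _ = 0
      rw [map_mul, map_prod]
      simp only [MvPolynomial.eval_X]
      by_cases hz : ∀ i, x i ≠ 0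
      · have hmem : x 0 ∈ hfin.toFinset := by
          rw [Set.Finite.mem_toFinset]
          exact ⟨x, hx, hz, rfl⟩
        have : MvPolynomial.eval x g = 0 := by
          rw [hg, key, hq, Polynomial.eval_prod]
          exact Finset.prod_eq_zero hmem (by simp)
        rw [this, zero_mul]
      · push_neg at hz
        obtain ⟨i, hi⟩ := hz
        rw [Finset.prod_eq_zero (Finset.mem_univ i) hi, mul_zero]
    rw [MvPolynomial.vanishingIdeal_zeroLocus_eq_radical, Ideal.mem_radical_iff] at hvan
    obtain ⟨N, hN⟩ := hvan
    refine ⟨q ^ N, pow_ne_zero _ hqne, N, ?_⟩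
    rw [map_pow, ← mul_pow]
    exact hN
end
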